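/- Fix a universe U equipped with a linear order ≤. The LFU (least-frequently used) paging algorithm over U is stable: for every sequence τ, every X ⊆ U, every z ∈ X, and all cache sizes a > b, if Out(LFU_b, τ[X], z) ∩ LFU_a(τz) ≠ ∅ then LFU_b(τ[X]z) ⊆ LFU_a(τz). -/

import Mathlib

open scoped Classical
set_option linter.unusedSectionVars false

namespace SetAssoc

variable {U : Type*} [LinearOrder U]

/-- `τ[X]`: the subsequence of `τ` consisting of the requests to items of `X`. -/
noncomputable def restrict (τ : List U) (X : Set U) : List U :=
  τ.filter (fun a => decide (a ∈ X))

/-- The set of items evicted by `A_k` in response to a request `z` after serving `τ`. -/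
def Out (A : ℕ → List U → Finset U) (k : ℕ) (τ : List U) (z : U) : Finset U :=
  A k τ \ A k (τ ++ [z])

/-- The LFU cache computed on the *reversed* request sequence (most recent request
first). On a miss with a full (nonempty) cache, the cached item with the smallest
access count `Φ(τz, ·)` (number of accesses so far), ties broken by taking the
`≤`-largest such item, is evicted. -/
def LFUrev (k : ℕ) : List U → Finset U
  | [] => ∅
  | z :: τ =>
    let C := LFUrev k τ
    if z ∈ C then C
    else if C.card < k then insert z C
    else if hC : C.Nonempty then
      insert z C \
        {(ofLex (C.sup' hC fun y => toLex (OrderDual.toDual ((z :: τ).count y), y))).2}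
    else C

/-- The LFU (least-frequently used) paging algorithm: `LFU k σ` is the cache of size
`k` after serving the request sequence `σ`. -/
def LFU (k : ℕ) (σ : List U) : Finset U :=
  LFUrev k σ.reverse

/-! ### Auxiliary machinery -/

/-- The eviction key: larger key = more evictable (smaller count; ties broken by
larger item). -/
noncomputable def K (n : ℕ) (p : U) : Lex (ℕᵒᵈ × U) := toLex (OrderDual.toDual n, p)

lemma K_lt_iff {n m : ℕ} {p q : U} :
    K n p < K m q ↔ m < n ∨ (n = m ∧ p < q) := by
  rw [K, K, Prod.Lex.lt_iff]; simp

lemma K_snd (n : ℕ) (p : U) : (ofLex (K n p)).2 = p := rfl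

lemma K_ne {n m : ℕ} {p q : U} (h : p ≠ q) : K n p ≠ K m q := by
  intro he
  exact h (congrArg (fun x => (ofLex x).2) he)

lemma K_lt_or_gt {n m : ℕ} {p q : U} (h : p ≠ q) : K n p < K m q ∨ K m q < K n p :=
  lt_or_gt_of_ne (K_ne h)

lemma K_succ_lt (n : ℕ) (p : U) : K (n + 1) p < K n p := by
  rw [K_lt_iff]; exact Or.inl (Nat.lt_succ_self n)

/-- One-step unfolding of `LFUrev`. -/
lemma LFUrev_cons (k : ℕ) (z : U) (ρ : List U) :
    LFUrev k (z :: ρ) =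
      if z ∈ LFUrev k ρ then LFUrev k ρ
      else if (LFUrev k ρ).card < k then insert z (LFUrev k ρ)
      else if hC : (LFUrev k ρ).Nonempty then
        insert z (LFUrev k ρ) \
          {(ofLex ((LFUrev k ρ).sup' hC fun y =>
              toLex (OrderDual.toDual ((z :: ρ).count y), y))).2}
      else LFUrev k ρ := rfl

/-- The evicted element: membership and strict maximality of its key. -/
lemma evict_spec (C : Finset U) (hC : C.Nonempty) (l : List U) :
    (ofLex (C.sup' hC fun y => toLex (OrderDual.toDual (l.count y), y))).2 ∈ C ∧
      ∀ d ∈ C, d ≠ (ofLex (C.sup' hC fun y => toLex (OrderDual.toDual (l.count y), y))).2 →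
        K (l.count d) d <
          K (l.count ((ofLex (C.sup' hC fun y =>
              toLex (OrderDual.toDual (l.count y), y))).2))
            ((ofLex (C.sup' hC fun y => toLex (OrderDual.toDual (l.count y), y))).2) := by
  obtain ⟨y₀, hy₀, he⟩ := Finset.exists_mem_eq_sup' hC
    (fun y => toLex (OrderDual.toDual (l.count y), y))
  have hm : (ofLex (C.sup' hC fun y => toLex (OrderDual.toDual (l.count y), y))).2 = y₀ := by
    rw [he]; rfl
  constructor
  · rw [hm]; exact hy₀
  · intro d hd hdm
    rw [hm] at hdm
    have hle : (fun y => toLex (OrderDual.toDual (l.count y), y)) d ≤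
        C.sup' hC (fun y => toLex (OrderDual.toDual (l.count y), y)) :=
      Finset.le_sup' (fun y => toLex (OrderDual.toDual (l.count y), y)) hd
    rw [he] at hle
    rw [hm]
    rcases lt_or_eq_of_le hle with h | h
    · exact h
    · exact absurd (show d = y₀ from congrArg (fun x => (ofLex x).2) h) hdm

lemma LFUrev_zero (ρ : List U) : LFUrev (U := U) 0 ρ = ∅ := by
  induction ρ with
  | nil => rfl
  | cons v ρ ih =>
    rw [LFUrev_cons, ih]
    simp

lemma LFUrev_subset_toFinset (k : ℕ) (ρ : List U) : LFUrev k ρ ⊆ ρ.toFinset := by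
  induction ρ with
  | nil => simp [LFUrev]
  | cons v ρ ih =>
    rw [LFUrev_cons]
    split_ifs with h1 h2 h3
    · exact ih.trans (by simp [Finset.subset_insert, List.toFinset_cons])
    · simp only [List.toFinset_cons]
      exact Finset.insert_subset_insert _ ih
    · refine (Finset.sdiff_subset).trans ?_
      simp only [List.toFinset_cons]
      exact Finset.insert_subset_insert _ ih
    · exact ih.trans (by simp [Finset.subset_insert, List.toFinset_cons])

lemma card_LFUrev_le (k : ℕ) (ρ : List U) : (LFUrev k ρ).card ≤ k := by
  induction ρ with
  | nil => simp [LFUrev]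
  | cons v ρ ih =>
    rw [LFUrev_cons]
    split_ifs with h1 h2 h3
    · exact ih
    · rw [Finset.card_insert_of_notMem h1]; omega
    · rw [Finset.sdiff_singleton_eq_erase, Finset.card_erase_of_mem
        (Finset.mem_insert_of_mem (evict_spec _ h3 _).1),
        Finset.card_insert_of_notMem h1]
      omega
    · exact ih

lemma LFUrev_eq_toFinset_or_full (k : ℕ) (ρ : List U) :
    LFUrev k ρ = ρ.toFinset ∨ (LFUrev k ρ).card = k := by
  induction ρ with
  | nil => left; rfl
  | cons v ρ ih =>
    rw [LFUrev_cons]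
    split_ifs with h1 h2 h3
    · rcases ih with h | h
      · left; rw [h]; rw [h] at h1
        simp [List.toFinset_cons, Finset.insert_eq_self.2 h1]
      · right; exact h
    · rcases ih with h | h
      · left; rw [h, List.toFinset_cons]
      · omega
    · right
      rw [Finset.sdiff_singleton_eq_erase, Finset.card_erase_of_mem
        (Finset.mem_insert_of_mem (evict_spec _ h3 _).1),
        Finset.card_insert_of_notMem h1]
      have := card_LFUrev_le k ρ
      omega
    · right
      have hC0 : LFUrev k ρ = ∅ := Finset.not_nonempty_iff_eq_empty.1 h3
      rw [hC0] at h2 ⊢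
      simp only [Finset.card_empty] at h2 ⊢
      omega

lemma mem_LFUrev_cons_self {k : ℕ} (hk : 1 ≤ k) (z : U) (ρ : List U) :
    z ∈ LFUrev k (z :: ρ) := by
  rw [LFUrev_cons]
  split_ifs with h1 h2 h3
  · exact h1
  · exact Finset.mem_insert_self _ _
  · rw [Finset.mem_sdiff]
    refine ⟨Finset.mem_insert_self _ _, ?_⟩
    simp only [Finset.mem_singleton]
    intro he
    exact h1 (he ▸ (evict_spec _ h3 _).1)
  · exfalso
    apply h2
    have : LFUrev k ρ = ∅ := Finset.not_nonempty_iff_eq_empty.1 h3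
    rw [this]
    simp only [Finset.card_empty]; omega

/-- Keys only get smaller when a request is prepended, so beating transfers backwards
for items different from the new request. -/
lemma beats_up {ρ : List U} {v p q : U} (hp : p ≠ v)
    (h : K ((v :: ρ).count p) p < K ((v :: ρ).count q) q) :
    K (ρ.count p) p < K (ρ.count q) q := by
  rw [List.count_cons_of_ne hp.symm] at h
  rcases eq_or_ne q v with rfl | hq
  · rw [List.count_cons_self] at h
    exact h.trans (K_succ_lt _ _)
  · rwa [List.count_cons_of_ne hq.symm] at h

/-- **Main invariant.** For any item `y` occurring in `ρ` but not in the LFU cache,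
at most one cached item has a strictly larger eviction key than `y`. -/
theorem beats_unique (k : ℕ) : ∀ (ρ : List U) (y d1 d2 : U),
    y ∈ ρ.toFinset → y ∉ LFUrev k ρ →
    d1 ∈ LFUrev k ρ → d2 ∈ LFUrev k ρ →
    K (ρ.count y) y < K (ρ.count d1) d1 →
    K (ρ.count y) y < K (ρ.count d2) d2 → d1 = d2 := by
  rcases Nat.eq_zero_or_pos k with rfl | hk
  · intro ρ y d1 d2 _ _ h1 _ _ _
    rw [LFUrev_zero] at h1
    exact absurd h1 (Finset.notMem_empty _)
  intro ρ
  induction ρ with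
  | nil => intro y d1 d2 hy; simp at hy
  | cons v ρ ih =>
    intro y d1 d2 hy hyc hd1 hd2 hb1 hb2
    have hv : v ∈ LFUrev k (v :: ρ) := mem_LFUrev_cons_self hk v ρ
    have hyv : y ≠ v := fun h => hyc (h ▸ hv)
    have hyρ : y ∈ ρ.toFinset := by
      rcases List.mem_cons.1 (List.mem_toFinset.1 hy) with h | h
      · exact absurd h hyv
      · exact List.mem_toFinset.2 h
    by_cases h1 : v ∈ LFUrev k ρ
    · have hD : LFUrev k (v :: ρ) = LFUrev k ρ := by rw [LFUrev_cons, if_pos h1]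
      rw [hD] at hyc hd1 hd2
      exact ih y d1 d2 hyρ hyc hd1 hd2 (beats_up hyv hb1) (beats_up hyv hb2)
    by_cases h2 : (LFUrev k ρ).card < k
    · have hC : LFUrev k ρ = ρ.toFinset := by
        rcases LFUrev_eq_toFinset_or_full k ρ with h | h
        · exact h
        · omega
      have hD : LFUrev k (v :: ρ) = insert v (LFUrev k ρ) := by
        rw [LFUrev_cons, if_neg h1, if_pos h2]
      exact absurd (hD ▸ Finset.mem_insert_of_mem (hC ▸ hyρ)) hyc
    by_cases h3 : (LFUrev k ρ).Nonempty
    case neg =>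
      exfalso
      apply h2
      rw [Finset.not_nonempty_iff_eq_empty.1 h3]
      simpa using hk
    set m := (ofLex ((LFUrev k ρ).sup' h3 fun y =>
        toLex (OrderDual.toDual ((v :: ρ).count y), y))).2 with hmdef
    have hD : LFUrev k (v :: ρ) = insert v (LFUrev k ρ) \ {m} := by
      rw [LFUrev_cons, if_neg h1, if_neg h2, dif_pos h3]
    obtain ⟨hmC, hmmax⟩ := evict_spec (LFUrev k ρ) h3 (v :: ρ)
    have key : ∀ d ∈ LFUrev k (v :: ρ),
        K ((v :: ρ).count y) y < K ((v :: ρ).count d) d → d = v := by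
      intro d hd hb
      by_contra hdv
      rw [hD, Finset.mem_sdiff, Finset.mem_insert] at hd
      have hdC : d ∈ LFUrev k ρ := hd.1.resolve_left hdv
      have hdm : d ≠ m := fun h => hd.2 (Finset.mem_singleton.2 h)
      have hmbeat : K ((v :: ρ).count d) d < K ((v :: ρ).count m) m := hmmax d hdC hdm
      by_cases hyC : y ∈ LFUrev k ρ
      · have hym : y = m := by
          by_contra hym
          exact hyc (hD ▸ Finset.mem_sdiff.2
            ⟨Finset.mem_insert_of_mem hyC, by simp [hym]⟩)
        have : K ((v :: ρ).count d) d < K ((v :: ρ).count y) y := by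
          rw [hym]; exact hmbeat
        exact absurd hb (asymm this)
      · have hbm : K ((v :: ρ).count y) y < K ((v :: ρ).count m) m := hb.trans hmbeat
        exact hdm (ih y d m hyρ hyC hdC hmC (beats_up hyv hb) (beats_up hyv hbm))
    rw [key d1 hd1 hb1, key d2 hd2 hb2]

/-- **LFU is stable.** -/
theorem lfu_isStable :
    ∀ (τ : List U) (X : Set U) (z : U), z ∈ X →
      ∀ a b : ℕ, b < a →
        (Out (LFU (U := U)) b (restrict τ X) z ∩ LFU a (τ ++ [z])).Nonempty →
        LFU b (restrict τ X ++ [z]) ⊆ LFU a (τ ++ [z]) := by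
  intro τ X z hzX a b hba hne
  have ha : 1 ≤ a := by omega
  set R := restrict τ X with hR
  set ρ := R.reverse with hρ
  set C := LFUrev b ρ with hCdef
  have hrev1 : (R ++ [z]).reverse = z :: ρ := by simp [hρ]
  have hLb : LFU b (R ++ [z]) = LFUrev b (z :: ρ) := by rw [LFU, hrev1]
  have hrev2 : (τ ++ [z]).reverse = z :: τ.reverse := by simp
  have hLa : LFU a (τ ++ [z]) = LFUrev a (z :: τ.reverse) := by rw [LFU, hrev2]
  set D := LFUrev a τ.reverse with hDdef
  set D' := LFUrev a (z :: τ.reverse) with hD'def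
  obtain ⟨w, hw⟩ := hne
  rw [Finset.mem_inter] at hw
  obtain ⟨hwOut, hwD'⟩ := hw
  rw [hLa] at hwD' ⊢
  rw [Out, Finset.mem_sdiff, hLb] at hwOut
  obtain ⟨hwC, hwne⟩ := hwOut
  have hwC : w ∈ C := hwC
  by_cases g1 : z ∈ C
  · exfalso
    apply hwne
    rw [LFUrev_cons, if_pos g1]
    exact hwC
  by_cases g2 : C.card < b
  · exfalso
    apply hwne
    rw [LFUrev_cons, if_neg g1, if_pos g2]
    exact Finset.mem_insert_of_mem hwC
  have g3 : C.Nonempty := ⟨w, hwC⟩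
  set m := (ofLex (C.sup' g3 fun y =>
      toLex (OrderDual.toDual ((z :: ρ).count y), y))).2 with hm
  have hstepC : LFUrev b (z :: ρ) = insert z C \ {m} := by
    rw [LFUrev_cons, if_neg g1, if_neg g2, dif_pos g3]
  have hwm : w = m := by
    by_contra h
    exact hwne (hstepC ▸ Finset.mem_sdiff.2
      ⟨Finset.mem_insert_of_mem hwC, by simp [h]⟩)
  subst hwm
  obtain ⟨hmC, hmmax⟩ := evict_spec C g3 (z :: ρ)
  rw [hLb, hstepC]
  intro u hu
  rw [Finset.mem_sdiff, Finset.mem_insert, Finset.mem_singleton] at hu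
  obtain ⟨hu1, hum⟩ := hu
  rcases hu1 with rfl | huC
  · exact mem_LFUrev_cons_self ha u τ.reverse
  by_contra huD'
  have hCX : ∀ p ∈ C, p ∈ X ∧ p ∈ τ := by
    intro p hp
    have := LFUrev_subset_toFinset b ρ hp
    rw [List.mem_toFinset, hρ, List.mem_reverse, hR, restrict, List.mem_filter] at this
    exact ⟨by simpa using this.2, this.1⟩
  have huX := hCX u huC
  have hmX := hCX m hmC
  have huz : u ≠ z := fun h => huD' (h ▸ mem_LFUrev_cons_self ha z τ.reverse)
  have hmz : m ≠ z := fun h => g1 (h ▸ hmC)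
  have hcnt : ∀ p ∈ X, ρ.count p = τ.reverse.count p := by
    intro p hp
    rw [hρ, List.count_reverse, List.count_reverse, hR, restrict,
      List.count_filter (by simpa using hp)]
  have hcntz : ∀ p : U, p ≠ z → p ∈ X → (z :: ρ).count p = τ.reverse.count p := by
    intro p hpz hpX
    rw [List.count_cons_of_ne hpz.symm]
    exact hcnt p hpX
  have hum2 : K (τ.reverse.count u) u < K (τ.reverse.count m) m := by
    have := hmmax u huC hum
    rwa [hcntz u huz huX.1, hcntz m hmz hmX.1] at this
  have huT : u ∈ τ.reverse.toFinset := by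
    rw [List.toFinset_reverse, List.mem_toFinset]
    exact huX.2
  by_cases hzD : z ∈ D
  · have hD'eq : D' = D := by rw [hD'def, LFUrev_cons, if_pos hzD]
    have hmD : m ∈ D := hD'eq ▸ hwD'
    have huD : u ∉ D := fun h => huD' (hD'eq ▸ h)
    have hzbu : ¬ K (τ.reverse.count u) u < K (τ.reverse.count z) z := by
      intro hbeat
      exact hmz (beats_unique a τ.reverse u z m huT huD hzD hmD hbeat hum2).symm
    have huzK : K (τ.reverse.count z) z < K (τ.reverse.count u) u :=
      (K_lt_or_gt huz.symm).resolve_right hzbu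
    have hzT : z ∈ ρ.toFinset := by
      have hzτ : z ∈ τ := by
        have := LFUrev_subset_toFinset a τ.reverse hzD
        rwa [List.toFinset_reverse, List.mem_toFinset] at this
      rw [hρ, List.toFinset_reverse, List.mem_toFinset, hR, restrict, List.mem_filter]
      exact ⟨hzτ, by simpa using hzX⟩
    have hbu : K (ρ.count z) z < K (ρ.count u) u := by
      rw [hcnt z hzX, hcnt u huX.1]
      exact huzK
    have hbm : K (ρ.count z) z < K (ρ.count m) m := by
      rw [hcnt z hzX, hcnt m hmX.1]
      exact huzK.trans hum2
    exact hum (beats_unique b ρ z u m hzT g1 huC hmC hbu hbm)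
  · by_cases hcard : D.card < a
    · have hDt : D = τ.reverse.toFinset := by
        rcases LFUrev_eq_toFinset_or_full a τ.reverse with h | h
        · exact h
        · have h2 : D.card = a := h
          omega
      apply huD'
      have huD : u ∈ D := by rw [hDt]; exact huT
      rw [hD'def, LFUrev_cons, if_neg hzD, if_pos hcard]
      exact Finset.mem_insert_of_mem huD
    · have hDne : D.Nonempty := Finset.card_pos.1 (by
        have h := le_of_not_gt hcard
        omega)
      set e := (ofLex (D.sup' hDne fun y =>
          toLex (OrderDual.toDual ((z :: τ.reverse).count y), y))).2 with he
      obtain ⟨heD, hemax⟩ := evict_spec D hDne (z :: τ.reverse)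
      have hstepD : D' = insert z D \ {e} := by
        rw [hD'def, LFUrev_cons, if_neg hzD, if_neg hcard, dif_pos hDne]
      have hmD' := hwD'
      rw [hstepD, Finset.mem_sdiff, Finset.mem_insert, Finset.mem_singleton] at hmD'
      have hmD : m ∈ D := hmD'.1.resolve_left hmz
      have hme : m ≠ e := hmD'.2
      have hez : e ≠ z := fun h => hzD (h ▸ heD)
      have hembeat : K (τ.reverse.count m) m < K (τ.reverse.count e) e := by
        have := hemax m hmD hme
        rwa [List.count_cons_of_ne hmz.symm, List.count_cons_of_ne hez.symm] at this
      by_cases huD : u ∈ D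
      · have hue : u = e := by
          by_contra h
          exact huD' (hstepD ▸ Finset.mem_sdiff.2
            ⟨Finset.mem_insert_of_mem huD, by simpa using h⟩)
        rw [hue] at hum2
        exact absurd hum2 (asymm hembeat)
      · have hbe : K (τ.reverse.count u) u < K (τ.reverse.count e) e :=
          hum2.trans hembeat
        exact hme (beats_unique a τ.reverse u m e huT huD hmD heD hum2 hbe)

end SetAssoc
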